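/- Let k be a field of characteristic zero, R = k[[x_1,...,x_d]], I an ideal of R, and c a positive integer. For every q with 1 ≤ q ≤ c, I ⊆ M^c if and only if Δ^{(c-q)}(I) ⊆ M^q, where M is the maximal ideal of R. (Equivalently, Sing(J,c) = Sing(Δ^{(c-q)}(J), q) for pairs.) -/

import Mathlib

set_option synthInstance.maxHeartbeats 1000000
set_option maxHeartbeats 1000000

/-- The partial derivative `∂/∂xᵢ` on `k[[x₁,…,x_d]]`. -/
noncomputable def pderivPS {k : Type} [CommRing k] {d : ℕ} (i : Fin d)
    (f : MvPowerSeries (Fin d) k) : MvPowerSeries (Fin d) k :=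
  fun s => ((s i + 1 : ℕ) : k) * MvPowerSeries.coeff (s + Finsupp.single i 1) f

/-- One application of the operator `Δ`. -/
noncomputable def DeltaStep {k : Type} [CommRing k] {d : ℕ}
    (I : Ideal (MvPowerSeries (Fin d) k)) : Ideal (MvPowerSeries (Fin d) k) :=
  I ⊔ Ideal.span {g | ∃ f ∈ I, ∃ i : Fin d, g = pderivPS i f}

/-- `Δ^{(j)}(I)`. -/
noncomputable def Delta {k : Type} [CommRing k] {d : ℕ} (j : ℕ)
    (I : Ideal (MvPowerSeries (Fin d) k)) : Ideal (MvPowerSeries (Fin d) k) :=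
  (DeltaStep (k := k) (d := d))^[j] I

open MvPowerSeries

/-- The ideal of power series of order at least `n`. -/
def Jdeg (k : Type) [CommRing k] (d : ℕ) (n : ℕ) : Ideal (MvPowerSeries (Fin d) k) where
  carrier := {f | ∀ s : Fin d →₀ ℕ, s.degree < n → MvPowerSeries.coeff s f = 0}
  zero_mem' := by intro s _; simp
  add_mem' := by intro a b ha hb s hs; rw [map_add, ha s hs, hb s hs, add_zero]
  smul_mem' := by
    classical
    intro c f hf s hs
    rw [smul_eq_mul, MvPowerSeries.coeff_mul]
    apply Finset.sum_eq_zero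
    rintro ⟨p, q⟩ hpq
    rw [Finset.HasAntidiagonal.mem_antidiagonal] at hpq
    have hq : q.degree ≤ s.degree := by
      rw [← hpq, Finsupp.degree_eq_weight_one, map_add]
      exact le_add_self
    rw [hf q (lt_of_le_of_lt hq hs), mul_zero]

theorem mem_Jdeg {k : Type} [CommRing k] {d n : ℕ} {f : MvPowerSeries (Fin d) k} :
    f ∈ Jdeg k d n ↔ ∀ s : Fin d →₀ ℕ, s.degree < n → MvPowerSeries.coeff s f = 0 :=
  Iff.rfl

theorem Jdeg_antitone {k : Type} [CommRing k] {d m n : ℕ} (h : m ≤ n) :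
    Jdeg k d n ≤ Jdeg k d m :=
  fun _ hf s hs => hf s (lt_of_lt_of_le hs h)

theorem degree_add' {d : ℕ} (a b : Fin d →₀ ℕ) : (a + b).degree = a.degree + b.degree := by
  simp [Finsupp.degree_eq_weight_one, map_add]

theorem degree_single' {d : ℕ} (i : Fin d) : (Finsupp.single i 1 : Fin d →₀ ℕ).degree = 1 := by
  simp [Finsupp.degree_single]

theorem maximalIdeal_eq_Jdeg_one {k : Type} [Field k] {d : ℕ} :
    IsLocalRing.maximalIdeal (MvPowerSeries (Fin d) k) = Jdeg k d 1 := by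
  ext f
  rw [IsLocalRing.mem_maximalIdeal, mem_nonunits_iff, isUnit_iff_constantCoeff,
    isUnit_iff_ne_zero, not_ne_iff, mem_Jdeg]
  constructor
  · intro h s hs
    have : s = 0 := by
      rwa [Nat.lt_one_iff, Finsupp.degree_eq_zero_iff] at hs
    rw [this, MvPowerSeries.coeff_zero_eq_constantCoeff_apply, h]
  · intro h
    rw [← MvPowerSeries.coeff_zero_eq_constantCoeff_apply]
    exact h 0 (by simp [map_zero])

theorem Jdeg_mul_le {k : Type} [Field k] {d : ℕ} (a b : ℕ) :
    Jdeg k d a * Jdeg k d b ≤ Jdeg k d (a + b) := by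
  classical
  rw [Ideal.mul_le]
  intro f hf g hg s hs
  rw [MvPowerSeries.coeff_mul]
  apply Finset.sum_eq_zero
  rintro ⟨p, q⟩ hpq
  rw [Finset.HasAntidiagonal.mem_antidiagonal] at hpq
  have hdeg : p.degree + q.degree = s.degree := by
    rw [← hpq, degree_add']
  rcases lt_or_ge p.degree a with h | h
  · rw [hf p h, zero_mul]
  · have : q.degree < b := by omega
    rw [hg q this, mul_zero]

theorem X_mem_Jdeg_one {k : Type} [Field k] {d : ℕ} (i : Fin d) :
    (MvPowerSeries.X i : MvPowerSeries (Fin d) k) ∈ Jdeg k d 1 := by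
  intro s hs
  have hs0 : s = 0 := by rwa [Nat.lt_one_iff, Finsupp.degree_eq_zero_iff] at hs
  rw [hs0]; exact MvPowerSeries.coeff_zero_X i

theorem Jdeg_le_pow {k : Type} [Field k] {d : ℕ} (n : ℕ) :
    Jdeg k d n ≤ (Jdeg k d 1) ^ n := by
  classical
  induction n with
  | zero => simp
  | succ n ih =>
    intro f hf
    set g : Fin d → MvPowerSeries (Fin d) k := fun i t =>
      if ∀ j < i, t j = 0 then MvPowerSeries.coeff (t + Finsupp.single i 1) f else 0 with hg
    have hcoeff : ∀ (i : Fin d) (t : Fin d →₀ ℕ), MvPowerSeries.coeff t (g i) =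
        if ∀ j < i, t j = 0 then MvPowerSeries.coeff (t + Finsupp.single i 1) f else 0 :=
      fun i t => rfl
    have hgJ : ∀ i, g i ∈ Jdeg k d n := by
      intro i t ht
      rw [hcoeff]
      split
      · apply hf
        have hadd := degree_add' t (Finsupp.single i 1)
        have h1 := degree_single' i
        omega
      · rfl
    have hsum : f = ∑ i : Fin d, MvPowerSeries.X i * g i := by
      ext s
      rw [map_sum]
      rcases eq_or_ne s 0 with rfl | hs
      · rw [hf 0 (by simp [map_zero])]
        symm; apply Finset.sum_eq_zero
        intro i _
        exact MvPowerSeries.coeff_zero_X_mul (g i)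
          i |>.symm ▸ MvPowerSeries.coeff_zero_X_mul (g i) i
      · have hsupp : s.support.Nonempty := by
          rwa [Finsupp.support_nonempty_iff]
        set i₀ := s.support.min' hsupp with hi₀
        have hi₀mem : i₀ ∈ s.support := s.support.min'_mem hsupp
        have hterm : ∀ i : Fin d, MvPowerSeries.coeff s (MvPowerSeries.X i * g i) =
            if Finsupp.single i 1 ≤ s then MvPowerSeries.coeff (s - Finsupp.single i 1) (g i)
            else 0 := by
          intro i
          rw [MvPowerSeries.X_def, MvPowerSeries.coeff_monomial_mul]
          split <;> simp
        rw [Finset.sum_eq_single i₀]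
        · rw [hterm]
          have hle : Finsupp.single i₀ 1 ≤ s := by
            rw [Finsupp.single_le_iff]
            exact Nat.one_le_iff_ne_zero.mpr (Finsupp.mem_support_iff.mp hi₀mem)
          rw [if_pos hle, hcoeff, if_pos, tsub_add_cancel_of_le hle]
          intro j hj
          have hjn : j ∉ s.support := fun hmem => absurd (s.support.min'_le j hmem) (by
            rw [← hi₀]; exact not_le.mpr hj)
          have hsj : s j = 0 := Finsupp.notMem_support_iff.mp hjn
          have : j ≠ i₀ := hj.ne
          simp [Finsupp.tsub_apply, Finsupp.single_apply, this, hsj]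
        · intro i _ hi
          rw [hterm]
          split
          · rename_i hle
            rw [hcoeff]
            rw [if_neg]
            intro hall
            apply hi
            have himem : i ∈ s.support := by
              rw [Finsupp.mem_support_iff]
              have := hle i
              simp [Finsupp.single_apply] at this
              omega
            have h1 : i₀ ≤ i := by rw [hi₀]; exact s.support.min'_le i himem
            rcases lt_or_eq_of_le h1 with hlt | heq
            · exfalso
              have hi₀ne := Finsupp.mem_support_iff.mp hi₀mem
              have : s i₀ = 0 := by
                have h2 := hall i₀ hlt
                have : i₀ ≠ i := ne_of_lt hlt
                simpa [Finsupp.tsub_apply, Finsupp.single_apply, Ne.symm this] using h2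
              exact hi₀ne this
            · exact heq.symm
          · rfl
        · intro h; exact absurd (Finset.mem_univ i₀) h
    rw [hsum, pow_succ']
    apply Ideal.sum_mem
    intro i _
    exact Ideal.mul_mem_mul (X_mem_Jdeg_one i) (ih (hgJ i))

theorem maximalIdeal_pow_eq {k : Type} [Field k] {d : ℕ} (n : ℕ) :
    (IsLocalRing.maximalIdeal (MvPowerSeries (Fin d) k)) ^ n = Jdeg k d n := by
  rw [maximalIdeal_eq_Jdeg_one]
  refine le_antisymm ?_ (Jdeg_le_pow n)
  induction n with
  | zero =>
    intro f _
    rw [mem_Jdeg]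
    intro s hs
    exact absurd hs (Nat.not_lt_zero _)
  | succ n ih =>
    calc (Jdeg k d 1) ^ (n + 1) = (Jdeg k d 1) ^ n * Jdeg k d 1 := by rw [pow_succ]
    _ ≤ Jdeg k d n * Jdeg k d 1 := Ideal.mul_mono_left ih
    _ ≤ Jdeg k d (n + 1) := Jdeg_mul_le n 1

theorem coeff_pderivPS {k : Type} [CommRing k] {d : ℕ} (i : Fin d)
    (f : MvPowerSeries (Fin d) k) (s : Fin d →₀ ℕ) :
    MvPowerSeries.coeff s (pderivPS i f) =
      ((s i + 1 : ℕ) : k) * MvPowerSeries.coeff (s + Finsupp.single i 1) f := rfl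

theorem pderivPS_mem_Jdeg {k : Type} [Field k] {d n : ℕ} {f : MvPowerSeries (Fin d) k}
    (hf : f ∈ Jdeg k d (n + 1)) (i : Fin d) : pderivPS i f ∈ Jdeg k d n := by
  rw [mem_Jdeg] at hf ⊢
  intro s hs
  rw [coeff_pderivPS, hf (s + Finsupp.single i 1) (by
    rw [degree_add', degree_single']; omega), mul_zero]

theorem DeltaStep_le_Jdeg {k : Type} [Field k] {d n : ℕ} {I : Ideal (MvPowerSeries (Fin d) k)}
    (hI : I ≤ Jdeg k d (n + 1)) : DeltaStep I ≤ Jdeg k d n := by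
  rw [DeltaStep, sup_le_iff]
  refine ⟨le_trans hI (Jdeg_antitone (Nat.le_succ n)), ?_⟩
  rw [Ideal.span_le]
  rintro g ⟨f, hfI, i, rfl⟩
  exact pderivPS_mem_Jdeg (hI hfI) i

theorem Delta_le_Jdeg {k : Type} [Field k] {d n j : ℕ} {I : Ideal (MvPowerSeries (Fin d) k)}
    (hI : I ≤ Jdeg k d n) : Delta j I ≤ Jdeg k d (n - j) := by
  induction j with
  | zero => simpa [Delta] using hI
  | succ j ih =>
    rw [Delta, Function.iterate_succ_apply']
    rcases Nat.lt_or_ge j n with hj | hj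
    · have heq : n - j = (n - (j+1)) + 1 := by omega
      exact DeltaStep_le_Jdeg (heq ▸ ih)
    · have h0 : n - (j+1) = 0 := by omega
      rw [h0]
      intro f _
      rw [mem_Jdeg]
      intro s hs
      exact absurd hs (Nat.not_lt_zero _)

theorem le_Jdeg_of_DeltaStep {k : Type} [Field k] [CharZero k] {d q : ℕ} (hq : 1 ≤ q)
    {I : Ideal (MvPowerSeries (Fin d) k)} (h : DeltaStep I ≤ Jdeg k d q) :
    I ≤ Jdeg k d (q + 1) := by
  intro f hf
  rw [mem_Jdeg]
  intro s hs
  rcases eq_or_ne s 0 with rfl | hsne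
  · have : f ∈ Jdeg k d q := h (le_sup_left (a := I) hf)
    exact mem_Jdeg.mp this 0 (by simp; omega)
  · obtain ⟨i, hi⟩ := Finsupp.support_nonempty_iff.mpr hsne
    have hsi : s i ≠ 0 := Finsupp.mem_support_iff.mp hi
    set t := s - Finsupp.single i 1 with ht
    have hle : Finsupp.single i 1 ≤ s := by
      rw [Finsupp.single_le_iff]; omega
    have hts : t + Finsupp.single i 1 = s := tsub_add_cancel_of_le hle
    have hd : pderivPS i f ∈ Jdeg k d q := by
      apply h
      apply (le_sup_right (a := I))
      exact Ideal.subset_span ⟨f, hf, i, rfl⟩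
    have hdeg : t.degree < q := by
      have := degree_add' t (Finsupp.single i 1)
      rw [hts, degree_single'] at this
      omega
    have hz := mem_Jdeg.mp hd t hdeg
    rw [coeff_pderivPS, hts] at hz
    rcases mul_eq_zero.mp hz with h0 | h0
    · exfalso
      have : (t i + 1 : ℕ) = 0 := Nat.cast_injective (by simpa using h0)
      omega
    · exact h0

theorem le_Jdeg_of_Delta {k : Type} [Field k] [CharZero k] {d q j : ℕ} (hq : 1 ≤ q)
    {I : Ideal (MvPowerSeries (Fin d) k)} (h : Delta j I ≤ Jdeg k d q) :
    I ≤ Jdeg k d (q + j) := by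
  induction j generalizing I with
  | zero => simpa [Delta] using h
  | succ j ih =>
    have h1 : Delta j (DeltaStep I) ≤ Jdeg k d q := by
      rwa [Delta, ← Function.iterate_succ_apply]
    have h3 := le_Jdeg_of_DeltaStep (by omega) (ih h1)
    have heq : q + j + 1 = q + (j + 1) := by omega
    rwa [heq] at h3

/-- For `R = k[[x₁,…,x_d]]`, `char k = 0`, maximal ideal `M`, ideal `I` and
`c ≥ 1`: for every `q` with `1 ≤ q ≤ c`, `I ⊆ M^c` iff `Δ^{(c-q)}(I) ⊆ M^q`
(i.e. `Sing(I,c) = Sing(Δ^{(c-q)}(I), q)`). -/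
theorem mem_pow_iff_delta_le_pow {k : Type} [Field k] [CharZero k] {d : ℕ}
    (I : Ideal (MvPowerSeries (Fin d) k)) (c : ℕ) (hc : 0 < c) :
    ∀ q, 1 ≤ q → q ≤ c →
      (I ≤ (IsLocalRing.maximalIdeal (MvPowerSeries (Fin d) k)) ^ c ↔
        Delta (c - q) I ≤ (IsLocalRing.maximalIdeal (MvPowerSeries (Fin d) k)) ^ q) := by
  intro q hq1 hqc
  rw [maximalIdeal_pow_eq, maximalIdeal_pow_eq]
  constructor
  · intro h
    have h2 := Delta_le_Jdeg (j := c - q) h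
    have heq : c - (c - q) = q := by omega
    rwa [heq] at h2
  · intro h
    have h2 := le_Jdeg_of_Delta hq1 h
    have heq : q + (c - q) = c := by omega
    rwa [heq] at h2
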